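/- For every integer n ≥ 2 and every ω with 0 < ω < 1 − 2^{−n}, the strict inequality pSep(ω,n) < pEnt(ω,n) holds, i.e. (1/2 + √((1−ω)^{1/n})·√(1 − (1−ω)^{1/n}))^n < 2^{−n}·(√((2^n−1)·ω) + √(1−ω))². Moreover the two bounds coincide at ω = 0 and at ω = 1 − 2^{−n}, where both equal 2^{−n} and 1 respectively. -/

import Mathlib

/-- Maximal success probability of entangled preparations:
`pEnt(ω,n) = 2^{−n}(√((2^n−1)ω) + √(1−ω))²`. -/
noncomputable def pEnt (ω : ℝ) (n : ℕ) : ℝ :=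
  (1 / (2 : ℝ) ^ n) * (Real.sqrt (((2 : ℝ) ^ n - 1) * ω) + Real.sqrt (1 - ω)) ^ 2

/-- Maximal success probability of fully separable preparations:
`pSep(ω,n) = (1/2 + √((1−ω)^{1/n})√(1−(1−ω)^{1/n}))^n`. -/
noncomputable def pSep (ω : ℝ) (n : ℕ) : ℝ :=
  (1 / 2 + Real.sqrt ((1 - ω) ^ ((n : ℝ)⁻¹)) *
    Real.sqrt (1 - (1 - ω) ^ ((n : ℝ)⁻¹))) ^ n

lemma step_ineq (a b : ℝ) (n : ℕ) (hb : 0 < b) (hab : b < a) (h1 : a ^ 2 + b ^ 2 = 1) :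
    a ^ n * b + (a + b) * Real.sqrt (((2 : ℝ) ^ n - 1) * (1 - a ^ (2 * n))) ≤
      Real.sqrt (((2 : ℝ) ^ (n + 1) - 1) * (1 - a ^ (2 * (n + 1)))) := by
  have ha : 0 < a := hb.trans hab
  have ha1 : a ≤ 1 := by nlinarith
  set sm := Real.sqrt ((2 : ℝ) ^ n - 1) with hsm
  set sd := Real.sqrt (1 - a ^ (2 * n)) with hsd
  have hM : (0:ℝ) ≤ (2 : ℝ) ^ n - 1 := by
    have : (1:ℝ) ≤ 2 ^ n := one_le_pow₀ (by norm_num)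
    linarith
  have hD : (0:ℝ) ≤ 1 - a ^ (2 * n) := by
    have := pow_le_one₀ ha.le ha1 (n := 2 * n)
    linarith
  have hsm2 : sm ^ 2 = (2 : ℝ) ^ n - 1 := Real.sq_sqrt hM
  have hsd2 : sd ^ 2 = 1 - a ^ (2 * n) := Real.sq_sqrt hD
  have hsmn : 0 ≤ sm := Real.sqrt_nonneg _
  have hsdn : 0 ≤ sd := Real.sqrt_nonneg _
  rw [Real.sqrt_mul hM]
  have hp : a ^ (2 * n) = (a ^ n) ^ 2 := by rw [two_mul, pow_add, sq]
  have hp' : a ^ (2 * (n + 1)) = (a ^ n) ^ 2 * a ^ 2 := by ring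
  have hLnn : 0 ≤ a ^ n * b + (a + b) * (sm * sd) := by positivity
  rw [← hsm, ← hsd]
  refine (Real.le_sqrt hLnn ?_).2 ?_
  · have hD' : (0:ℝ) ≤ 1 - a ^ (2 * (n + 1)) := by
      have := pow_le_one₀ ha.le ha1 (n := 2 * (n + 1))
      linarith
    have hM' : (0:ℝ) ≤ (2 : ℝ) ^ (n + 1) - 1 := by
      have : (1:ℝ) ≤ 2 ^ (n + 1) := one_le_pow₀ (by norm_num)
      linarith
    positivity
  · have h2 : (2 : ℝ) ^ (n + 1) = 2 * 2 ^ n := by ring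
    rw [h2, hp']
    set p := a ^ n with hpdef
    have hp2 : p ^ 2 = 1 - sd ^ 2 := by rw [hsd2, hp]; ring
    have h2n' : (2:ℝ) ^ n = sm ^ 2 + 1 := by linarith
    rw [h2n']
    have hident : (2 * (sm ^ 2 + 1) - 1) * (1 - p ^ 2 * a ^ 2) -
        (p * b + (a + b) * (sm * sd)) ^ 2 =
        (p * b * sm - a * sd) ^ 2 + (p * b * sm - b * sd) ^ 2 +
          (sm * sd * (a - b)) ^ 2 := by
      linear_combination (-(2 * sm ^ 2 + 1) * (a ^ 2 + b ^ 2)) * hp2 +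
        (-(2 * sm ^ 2 + 1)) * h1
    nlinarith [sq_nonneg (p * b * sm - a * sd), sq_nonneg (p * b * sm - b * sd),
      sq_nonneg (sm * sd * (a - b)), hident]

lemma key_ineq (a b : ℝ) (hb : 0 < b) (hab : b < a) (h1 : a ^ 2 + b ^ 2 = 1) :
    ∀ n : ℕ, 2 ≤ n →
      (a + b) ^ n < a ^ n + Real.sqrt (((2 : ℝ) ^ n - 1) * (1 - a ^ (2 * n))) := by
  have ha : 0 < a := hb.trans hab
  intro n hn
  induction n, hn using Nat.le_induction with
  | base =>
      have hident : ((2:ℝ) ^ 2 - 1) * (1 - a ^ (2 * 2)) - (2 * (a * b) + b ^ 2) ^ 2 =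
          2 * b ^ 2 * (a - b) ^ 2 := by
        linear_combination (-3 * (a ^ 2 + b ^ 2 + 1)) * h1
      have hlt : 2 * (a * b) + b ^ 2 < Real.sqrt (((2:ℝ) ^ 2 - 1) * (1 - a ^ (2 * 2))) := by
        refine (Real.lt_sqrt (by positivity)).2 ?_
        nlinarith [hident, mul_pos (mul_pos (by norm_num : (0:ℝ) < 2) (mul_pos hb hb))
          (mul_pos (sub_pos.2 hab) (sub_pos.2 hab))]
      nlinarith [hlt]
  | succ n hn ih =>
      have hab' : 0 < a + b := by linarith
      have h1' : (a + b) ^ (n + 1) < (a + b) * (a ^ n + Real.sqrt (((2:ℝ) ^ n - 1) * (1 - a ^ (2 * n)))) := by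
        calc (a + b) ^ (n + 1) = (a + b) * (a + b) ^ n := by ring
        _ < _ := by exact mul_lt_mul_of_pos_left ih hab'
      have h2' := step_ineq a b n hb hab h1
      calc (a + b) ^ (n + 1)
          < (a + b) * (a ^ n + Real.sqrt (((2:ℝ) ^ n - 1) * (1 - a ^ (2 * n)))) := h1'
        _ = a ^ (n + 1) + (a ^ n * b + (a + b) * Real.sqrt (((2:ℝ) ^ n - 1) * (1 - a ^ (2 * n)))) := by ring
        _ ≤ a ^ (n + 1) + Real.sqrt (((2:ℝ) ^ (n + 1) - 1) * (1 - a ^ (2 * (n + 1)))) := by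
            linarith [h2']

theorem entanglement_advantage_gap (n : ℕ) (hn : 2 ≤ n) :
    -- strict gap on the open interval (0, 1 − 2^{−n})
    (∀ ω : ℝ, 0 < ω → ω < 1 - 1 / (2 : ℝ) ^ n → pSep ω n < pEnt ω n) ∧
    -- coincidence at the endpoints
    pSep 0 n = 1 / (2 : ℝ) ^ n ∧ pEnt 0 n = 1 / (2 : ℝ) ^ n ∧
    pSep (1 - 1 / (2 : ℝ) ^ n) n = 1 ∧ pEnt (1 - 1 / (2 : ℝ) ^ n) n = 1 := by
  have hn0 : (n : ℝ) ≠ 0 := by positivity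
  have h2n : (1:ℝ) < (2:ℝ) ^ n := one_lt_pow₀ (by norm_num) (by omega)
  have h2np : (0:ℝ) < (2:ℝ) ^ n := by positivity
  have hhalf : ((1:ℝ)/2) ^ (n:ℕ) = 1 / (2:ℝ) ^ n := by rw [div_pow, one_pow]
  refine ⟨?_, ?_, ?_, ?_, ?_⟩
  · intro ω hω1 hω2
    set t := (1 - ω) ^ ((n : ℝ)⁻¹) with ht
    have h1ω : 0 < 1 - ω := by
      have : 1 / (2:ℝ) ^ n > 0 := by positivity
      linarith
    have htpos : 0 < t := Real.rpow_pos_of_pos h1ω _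
    have ht1 : t < 1 := Real.rpow_lt_one h1ω.le (by linarith) (by positivity)
    have hthalf : (1:ℝ)/2 < t := by
      have hlt : ((1:ℝ)/2) ^ (n:ℕ) < 1 - ω := by rw [hhalf]; linarith
      have h := Real.rpow_lt_rpow (by positivity) hlt (z := (n:ℝ)⁻¹) (by positivity)
      calc (1:ℝ)/2 = (((1:ℝ)/2) ^ (n:ℕ)) ^ ((n:ℝ)⁻¹) := by
            rw [← Real.rpow_natCast ((1:ℝ)/2) n, ← Real.rpow_mul (by norm_num),
              mul_inv_cancel₀ hn0, Real.rpow_one]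
        _ < t := h
    have htn : t ^ (n:ℕ) = 1 - ω := by
      rw [ht, ← Real.rpow_natCast ((1 - ω) ^ ((n : ℝ)⁻¹)) n, ← Real.rpow_mul h1ω.le,
        inv_mul_cancel₀ hn0, Real.rpow_one]
    set a := Real.sqrt t with ha
    set b := Real.sqrt (1 - t) with hb
    have ha2 : a ^ 2 = t := Real.sq_sqrt htpos.le
    have hb2 : b ^ 2 = 1 - t := Real.sq_sqrt (by linarith)
    have h1 : a ^ 2 + b ^ 2 = 1 := by rw [ha2, hb2]; ring
    have hbpos : 0 < b := Real.sqrt_pos.2 (by linarith)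
    have hba : b < a := by
      rw [ha, hb]; exact Real.sqrt_lt_sqrt (by linarith) (by linarith)
    have hapos : 0 < a := hbpos.trans hba
    have hkey := key_ineq a b hbpos hba h1 n hn
    have ha2n : a ^ (2 * n) = t ^ n := by rw [two_mul, ← ha2]; ring
    have hωeq : ω = 1 - a ^ (2 * n) := by rw [ha2n, htn]; ring
    have hsqrt1ω : Real.sqrt (1 - ω) = a ^ n := by
      have h : 1 - ω = (a ^ n) ^ 2 := by rw [← htn, ← ha2]; ring
      rw [h, Real.sqrt_sq (by positivity)]
    have hpSep : pSep ω n = ((a + b) ^ n) ^ 2 / 2 ^ n := by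
      rw [pSep, ← ht, ← ha, ← hb]
      have : 1 / 2 + a * b = (a + b) ^ 2 / 2 := by nlinarith [h1]
      rw [this, div_pow, ← pow_mul, ← pow_mul, mul_comm 2 n]
    have hpEnt : pEnt ω n = (a ^ n + Real.sqrt (((2:ℝ) ^ n - 1) * (1 - a ^ (2 * n)))) ^ 2 / 2 ^ n := by
      rw [pEnt, hsqrt1ω, ← hωeq, add_comm]
      ring
    rw [hpSep, hpEnt]
    gcongr ?_ / _
    exact pow_lt_pow_left₀ hkey (by positivity) two_ne_zero
  · rw [pSep]
    norm_num [Real.one_rpow, hhalf]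
  · rw [pEnt]
    norm_num
  · have ht : ((2:ℝ)^n)⁻¹ ^ ((n:ℝ)⁻¹) = 1/2 := by
      rw [show ((2:ℝ)^n)⁻¹ = ((1:ℝ)/2) ^ (n:ℕ) by rw [hhalf]; ring,
        ← Real.rpow_natCast ((1:ℝ)/2) n, ← Real.rpow_mul (by norm_num),
        mul_inv_cancel₀ hn0, Real.rpow_one]
    rw [pSep]
    have : 1 - (1 - 1 / (2:ℝ)^n) = ((2:ℝ)^n)⁻¹ := by ring
    rw [this, ht]
    rw [show (1:ℝ) - 1/2 = 1/2 by norm_num,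
      Real.mul_self_sqrt (by norm_num : (0:ℝ) ≤ 1/2)]
    norm_num
  · rw [pEnt]
    set c := (2:ℝ)^n with hc
    have h1 : 1 - (1 - 1/c) = 1/c := by ring
    have h2 : (c - 1) * (1 - 1/c) = (c-1)^2 / c := by field_simp
    rw [h1, h2]
    have hsc : Real.sqrt ((c-1)^2/c) = (c-1)/Real.sqrt c := by
      rw [Real.sqrt_div (by positivity), Real.sqrt_sq (by linarith)]
    have hsc2 : Real.sqrt (1/c) = 1/Real.sqrt c := by
      rw [one_div, Real.sqrt_inv, one_div]
    rw [hsc, hsc2]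
    have hscpos : 0 < Real.sqrt c := Real.sqrt_pos.2 h2np
    rw [← add_div, sub_add_cancel, Real.div_sqrt, Real.sq_sqrt h2np.le]
    field_simp
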